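/- Let p, q ∈ ℝ, z = x + i·y ∈ ℂ with x, y ∈ ℝ, and θ ∈ ℝ; write u = e^{iθ}. Then (u − z)·(conj(z)·u − 1)·(u² − 1)²·p² − (u − q)·(conj(z)·u² − z)²·(q·u − 1) = 4·u³·( p²·sin²θ·(x² + y² + 1 − 2·x·cos θ − 2·y·sin θ) − (q² − 2·q·cos θ + 1)·(x·sin θ − y·cos θ)² ). -/
import Mathlib

set_option maxRecDepth 8000
set_option maxHeartbeats 2000000

lemma fundamental_polynomial_aux (A B X Y P Q : ℂ) (h : A^2 + B^2 = 1) :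
    ((A+B*Complex.I) - (X+Y*Complex.I)) * ((X - Y*Complex.I) * (A+B*Complex.I) - 1) *
        ((A+B*Complex.I)^2 - 1)^2 * P^2
      - ((A+B*Complex.I) - Q) * ((X - Y*Complex.I) * (A+B*Complex.I)^2 - (X+Y*Complex.I))^2 *
        (Q*(A+B*Complex.I) - 1) =
    4 * (A+B*Complex.I)^3 *
      (P^2*B^2*(X^2+Y^2+1-2*X*A-2*Y*B) - (Q^2-2*Q*A+1)*(X*B-Y*A)^2) := by
  have hI : Complex.I^2 = -1 := Complex.I_sq
  linear_combination ((-1:ℂ)*Y*P^2*Complex.I + (-1:ℂ)*Y^2*Q + (-1:ℂ)*X*P^2 + (2:ℂ)*X*Y*Q*Complex.I + (1:ℂ)*X^2*Q + (1:ℂ)*B*P^2*Complex.I + (1:ℂ)*B*Y^2*Complex.I + (1:ℂ)*B*Y^2*Q^2*Complex.I + (1:ℂ)*B*Y^2*P^2*Complex.I + (2:ℂ)*B*X*Y + (2:ℂ)*B*X*Y*Q^2 + (-1:ℂ)*B*X^2*Complex.I + (-1:ℂ)*B*X^2*Q^2*Complex.I + (1:ℂ)*B*X^2*P^2*Complex.I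 + (-4:ℂ)*B^2*Y*P^2*Complex.I + (2:ℂ)*B^2*Y^2*Q + (-2:ℂ)*B^2*X*P^2 + (2:ℂ)*B^2*X^2*Q + (3:ℂ)*B^3*P^2*Complex.I + (-1:ℂ)*B^3*Y^2*Complex.I + (-1:ℂ)*B^3*Y^2*Q^2*Complex.I + (3:ℂ)*B^3*Y^2*P^2*Complex.I + (2:ℂ)*B^3*X*Y + (2:ℂ)*B^3*X*Y*Q^2 + (-3:ℂ)*B^3*X^2*Complex.I + (-3:ℂ)*B^3*X^2*Q^2*Complex.I + (3:ℂ)*B^3*X^2*P^2*Complex.I + (-7:ℂ)*B^4*Y*P^2*Complex.I + (-1:ℂ)*B^4*Y^2*Q + (-1:ℂ)*B^4*X*P^2 + (-2:ℂ)*B^4*X*Y*Q*Complex.I + (1:ℂ)*B^4*X^2*Q + (1:ℂ)*A*P^2 + (1:ℂ)*A*Y^2 + (1:ℂ)*A*Y^2*Q^2 + (1:ℂ)*A*Y^2*P^2 + (-2:ℂ)*A*X*Y*Complex.I + (-2:ℂ)*A*X*Y*Q^2*Complex.I + (-1:ℂ)*A*X^2 + (-1:ℂ)*A*X^2*Q^2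 + (1:ℂ)*A*X^2*P^2 + (-6:ℂ)*A*B*Y*P^2 + (-6:ℂ)*A*B*Y^2*Q*Complex.I + (2:ℂ)*A*B*X*P^2*Complex.I + (-4:ℂ)*A*B*X*Y*Q + (-2:ℂ)*A*B*X^2*Q*Complex.I + (7:ℂ)*A*B^2*P^2 + (-5:ℂ)*A*B^2*Y^2 + (-5:ℂ)*A*B^2*Y^2*Q^2 + (7:ℂ)*A*B^2*Y^2*P^2 + (-2:ℂ)*A*B^2*X*Y*Complex.I + (-2:ℂ)*A*B^2*X*Y*Q^2*Complex.I + (-7:ℂ)*A*B^2*X^2 + (-7:ℂ)*A*B^2*X^2*Q^2 + (7:ℂ)*A*B^2*X^2*P^2 + (-18:ℂ)*A*B^3*Y*P^2 + (6:ℂ)*A*B^3*Y^2*Q*Complex.I + (-2:ℂ)*A*B^3*X*P^2*Complex.I + (-12:ℂ)*A*B^3*X*Y*Q + (2:ℂ)*A*B^3*X^2*Q*Complex.I + (2:ℂ)*A^2*Y*P^2*Complex.I + (-4:ℂ)*A^2*Y^2*Q + (4:ℂ)*A^2*X*Y*Q*Complex.I + (-5:ℂ)*A^2*B*P^2*Complex.I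 + (7:ℂ)*A^2*B*Y^2*Complex.I + (7:ℂ)*A^2*B*Y^2*Q^2*Complex.I + (-5:ℂ)*A^2*B*Y^2*P^2*Complex.I + (2:ℂ)*A^2*B*X*Y + (2:ℂ)*A^2*B*X*Y*Q^2 + (5:ℂ)*A^2*B*X^2*Complex.I + (5:ℂ)*A^2*B*X^2*Q^2*Complex.I + (-5:ℂ)*A^2*B*X^2*P^2*Complex.I + (16:ℂ)*A^2*B^2*Y*P^2*Complex.I + (16:ℂ)*A^2*B^2*Y^2*Q + (-8:ℂ)*A^2*B^2*X*P^2 + (16:ℂ)*A^2*B^2*X*Y*Q*Complex.I + (8:ℂ)*A^2*B^2*X^2*Q + (-1:ℂ)*A^3*P^2 + (3:ℂ)*A^3*Y^2 + (3:ℂ)*A^3*Y^2*Q^2 + (-1:ℂ)*A^3*Y^2*P^2 + (-2:ℂ)*A^3*X*Y*Complex.I + (-2:ℂ)*A^3*X*Y*Q^2*Complex.I + (1:ℂ)*A^3*X^2 + (1:ℂ)*A^3*X^2*Q^2 + (-1:ℂ)*A^3*X^2*P^2 + (6:ℂ)*A^3*B*Y*P^2 + (-18:ℂ)*A^3*B*Y^2*Q*Complex.I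 + (6:ℂ)*A^3*B*X*P^2*Complex.I + (4:ℂ)*A^3*B*X*Y*Q + (-6:ℂ)*A^3*B*X^2*Q*Complex.I + (-1:ℂ)*A^4*Y*P^2*Complex.I + (-7:ℂ)*A^4*Y^2*Q + (1:ℂ)*A^4*X*P^2 + (2:ℂ)*A^4*X*Y*Q*Complex.I + (-1:ℂ)*A^4*X^2*Q) * h + ((-1:ℂ)*Y^2*Q + (1:ℂ)*B*Y^2*Complex.I + (1:ℂ)*B*Y^2*Q^2*Complex.I + (1:ℂ)*B*Y^2*P^2*Complex.I + (2:ℂ)*B*X*Y + (2:ℂ)*B*X*Y*Q^2 + (-3:ℂ)*B^2*Y*P^2*Complex.I + (3:ℂ)*B^2*Y^2*Q + (-3:ℂ)*B^2*Y^2*Q*Complex.I^2 + (-1:ℂ)*B^2*X*P^2 + (-2:ℂ)*B^2*X*Y*Q*Complex.I + (1:ℂ)*B^2*X^2*Q + (2:ℂ)*B^3*P^2*Complex.I + (-2:ℂ)*B^3*Y^2*Complex.I + (2:ℂ)*B^3*Y^2*Complex.I^3 + (-2:ℂ)*B^3*Y^2*Q^2*Complex.I + (2:ℂ)*B^3*Y^2*Q^2*Complex.I^3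 + (2:ℂ)*B^3*Y^2*P^2*Complex.I + (-2:ℂ)*B^3*Y^2*P^2*Complex.I^3 + (-2:ℂ)*B^3*X^2*Complex.I + (-2:ℂ)*B^3*X^2*Q^2*Complex.I + (2:ℂ)*B^3*X^2*P^2*Complex.I + (-3:ℂ)*B^4*Y*P^2*Complex.I + (3:ℂ)*B^4*Y*P^2*Complex.I^3 + (-3:ℂ)*B^4*Y^2*Q + (3:ℂ)*B^4*Y^2*Q*Complex.I^2 + (-3:ℂ)*B^4*Y^2*Q*Complex.I^4 + (1:ℂ)*B^4*X*P^2 + (-1:ℂ)*B^4*X*P^2*Complex.I^2 + (-2:ℂ)*B^4*X*Y*Q*Complex.I + (2:ℂ)*B^4*X*Y*Q*Complex.I^3 + (-1:ℂ)*B^4*X^2*Q + (1:ℂ)*B^4*X^2*Q*Complex.I^2 + (-3:ℂ)*B^5*P^2*Complex.I + (-1:ℂ)*B^5*P^2*Complex.I^3 + (1:ℂ)*B^5*Y^2*Complex.I + (-1:ℂ)*B^5*Y^2*Complex.I^3 + (1:ℂ)*B^5*Y^2*Complex.I^5 + (1:ℂ)*B^5*Y^2*Q^2*Complex.I + (-1:ℂ)*B^5*Y^2*Q^2*Complex.I^3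 + (1:ℂ)*B^5*Y^2*Q^2*Complex.I^5 + (-3:ℂ)*B^5*Y^2*P^2*Complex.I + (-1:ℂ)*B^5*Y^2*P^2*Complex.I^3 + (1:ℂ)*B^5*Y^2*P^2*Complex.I^5 + (-2:ℂ)*B^5*X*Y + (2:ℂ)*B^5*X*Y*Complex.I^2 + (-2:ℂ)*B^5*X*Y*Complex.I^4 + (-2:ℂ)*B^5*X*Y*Q^2 + (2:ℂ)*B^5*X*Y*Q^2*Complex.I^2 + (-2:ℂ)*B^5*X*Y*Q^2*Complex.I^4 + (3:ℂ)*B^5*X^2*Complex.I + (1:ℂ)*B^5*X^2*Complex.I^3 + (3:ℂ)*B^5*X^2*Q^2*Complex.I + (1:ℂ)*B^5*X^2*Q^2*Complex.I^3 + (-3:ℂ)*B^5*X^2*P^2*Complex.I + (-1:ℂ)*B^5*X^2*P^2*Complex.I^3 + (7:ℂ)*B^6*Y*P^2*Complex.I + (1:ℂ)*B^6*Y*P^2*Complex.I^3 + (-1:ℂ)*B^6*Y*P^2*Complex.I^5 + (1:ℂ)*B^6*Y^2*Q + (-1:ℂ)*B^6*Y^2*Q*Complex.I^2 + (1:ℂ)*B^6*Y^2*Q*Complex.I^4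 + (-1:ℂ)*B^6*Y^2*Q*Complex.I^6 + (1:ℂ)*B^6*X*P^2 + (-1:ℂ)*B^6*X*P^2*Complex.I^2 + (1:ℂ)*B^6*X*P^2*Complex.I^4 + (2:ℂ)*B^6*X*Y*Q*Complex.I + (-2:ℂ)*B^6*X*Y*Q*Complex.I^3 + (2:ℂ)*B^6*X*Y*Q*Complex.I^5 + (-1:ℂ)*B^6*X^2*Q + (1:ℂ)*B^6*X^2*Q*Complex.I^2 + (-1:ℂ)*B^6*X^2*Q*Complex.I^4 + (1:ℂ)*A*Y^2 + (1:ℂ)*A*Y^2*Q^2 + (1:ℂ)*A*Y^2*P^2 + (-6:ℂ)*A*B*Y*P^2 + (-6:ℂ)*A*B*Y^2*Q*Complex.I + (-4:ℂ)*A*B*X*Y*Q + (6:ℂ)*A*B^2*P^2 + (-6:ℂ)*A*B^2*Y^2 + (6:ℂ)*A*B^2*Y^2*Complex.I^2 + (-6:ℂ)*A*B^2*Y^2*Q^2 + (6:ℂ)*A*B^2*Y^2*Q^2*Complex.I^2 + (6:ℂ)*A*B^2*Y^2*P^2 + (-6:ℂ)*A*B^2*Y^2*P^2*Complex.I^2 +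 (-6:ℂ)*A*B^2*X^2 + (-6:ℂ)*A*B^2*X^2*Q^2 + (6:ℂ)*A*B^2*X^2*P^2 + (-12:ℂ)*A*B^3*Y*P^2 + (12:ℂ)*A*B^3*Y*P^2*Complex.I^2 + (12:ℂ)*A*B^3*Y^2*Q*Complex.I + (-12:ℂ)*A*B^3*Y^2*Q*Complex.I^3 + (-4:ℂ)*A*B^3*X*P^2*Complex.I + (-8:ℂ)*A*B^3*X*Y*Q + (8:ℂ)*A*B^3*X*Y*Q*Complex.I^2 + (4:ℂ)*A*B^3*X^2*Q*Complex.I + (-7:ℂ)*A*B^4*P^2 + (-5:ℂ)*A*B^4*P^2*Complex.I^2 + (5:ℂ)*A*B^4*Y^2 + (-5:ℂ)*A*B^4*Y^2*Complex.I^2 + (5:ℂ)*A*B^4*Y^2*Complex.I^4 + (5:ℂ)*A*B^4*Y^2*Q^2 + (-5:ℂ)*A*B^4*Y^2*Q^2*Complex.I^2 + (5:ℂ)*A*B^4*Y^2*Q^2*Complex.I^4 + (-7:ℂ)*A*B^4*Y^2*P^2 + (-5:ℂ)*A*B^4*Y^2*P^2*Complex.I^2 + (5:ℂ)*A*B^4*Y^2*P^2*Complex.I^4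 + (2:ℂ)*A*B^4*X*Y*Complex.I + (-10:ℂ)*A*B^4*X*Y*Complex.I^3 + (2:ℂ)*A*B^4*X*Y*Q^2*Complex.I + (-10:ℂ)*A*B^4*X*Y*Q^2*Complex.I^3 + (7:ℂ)*A*B^4*X^2 + (5:ℂ)*A*B^4*X^2*Complex.I^2 + (7:ℂ)*A*B^4*X^2*Q^2 + (5:ℂ)*A*B^4*X^2*Q^2*Complex.I^2 + (-7:ℂ)*A*B^4*X^2*P^2 + (-5:ℂ)*A*B^4*X^2*P^2*Complex.I^2 + (18:ℂ)*A*B^5*Y*P^2 + (6:ℂ)*A*B^5*Y*P^2*Complex.I^2 + (-6:ℂ)*A*B^5*Y*P^2*Complex.I^4 + (-6:ℂ)*A*B^5*Y^2*Q*Complex.I + (6:ℂ)*A*B^5*Y^2*Q*Complex.I^3 + (-6:ℂ)*A*B^5*Y^2*Q*Complex.I^5 + (2:ℂ)*A*B^5*X*P^2*Complex.I + (6:ℂ)*A*B^5*X*P^2*Complex.I^3 + (12:ℂ)*A*B^5*X*Y*Q + (-12:ℂ)*A*B^5*X*Y*Q*Complex.I^2 + (12:ℂ)*A*B^5*X*Y*Q*Complex.I^4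 + (-2:ℂ)*A*B^5*X^2*Q*Complex.I + (-6:ℂ)*A*B^5*X^2*Q*Complex.I^3 + (-3:ℂ)*A^2*Y^2*Q + (6:ℂ)*A^2*B*Y^2*Complex.I + (6:ℂ)*A^2*B*Y^2*Q^2*Complex.I + (-6:ℂ)*A^2*B*Y^2*P^2*Complex.I + (18:ℂ)*A^2*B^2*Y*P^2*Complex.I + (18:ℂ)*A^2*B^2*Y^2*Q + (-18:ℂ)*A^2*B^2*Y^2*Q*Complex.I^2 + (-6:ℂ)*A^2*B^2*X*P^2 + (12:ℂ)*A^2*B^2*X*Y*Q*Complex.I + (6:ℂ)*A^2*B^2*X^2*Q + (-10:ℂ)*A^2*B^3*P^2*Complex.I + (-6:ℂ)*A^2*B^3*Y^2*Complex.I + (10:ℂ)*A^2*B^3*Y^2*Complex.I^3 + (-6:ℂ)*A^2*B^3*Y^2*Q^2*Complex.I + (10:ℂ)*A^2*B^3*Y^2*Q^2*Complex.I^3 + (-10:ℂ)*A^2*B^3*Y^2*P^2*Complex.I + (10:ℂ)*A^2*B^3*Y^2*P^2*Complex.I^3 + (-4:ℂ)*A^2*B^3*X*Y + (-20:ℂ)*A^2*B^3*X*Y*Complex.I^2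 + (-4:ℂ)*A^2*B^3*X*Y*Q^2 + (-20:ℂ)*A^2*B^3*X*Y*Q^2*Complex.I^2 + (10:ℂ)*A^2*B^3*X^2*Complex.I + (10:ℂ)*A^2*B^3*X^2*Q^2*Complex.I + (-10:ℂ)*A^2*B^3*X^2*P^2*Complex.I + (15:ℂ)*A^2*B^4*Y*P^2*Complex.I + (-15:ℂ)*A^2*B^4*Y*P^2*Complex.I^3 + (-15:ℂ)*A^2*B^4*Y^2*Q + (15:ℂ)*A^2*B^4*Y^2*Q*Complex.I^2 + (-15:ℂ)*A^2*B^4*Y^2*Q*Complex.I^4 + (9:ℂ)*A^2*B^4*X*P^2 + (15:ℂ)*A^2*B^4*X*P^2*Complex.I^2 + (-14:ℂ)*A^2*B^4*X*Y*Q*Complex.I + (30:ℂ)*A^2*B^4*X*Y*Q*Complex.I^3 + (-9:ℂ)*A^2*B^4*X^2*Q + (-15:ℂ)*A^2*B^4*X^2*Q*Complex.I^2 + (2:ℂ)*A^3*Y^2 + (2:ℂ)*A^3*Y^2*Q^2 + (-2:ℂ)*A^3*Y^2*P^2 + (12:ℂ)*A^3*B*Y*P^2 + (-12:ℂ)*A^3*B*Y^2*Q*Complex.I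 + (8:ℂ)*A^3*B*X*Y*Q + (-10:ℂ)*A^3*B^2*P^2 + (2:ℂ)*A^3*B^2*Y^2 + (10:ℂ)*A^3*B^2*Y^2*Complex.I^2 + (2:ℂ)*A^3*B^2*Y^2*Q^2 + (10:ℂ)*A^3*B^2*Y^2*Q^2*Complex.I^2 + (-10:ℂ)*A^3*B^2*Y^2*P^2 + (10:ℂ)*A^3*B^2*Y^2*P^2*Complex.I^2 + (-20:ℂ)*A^3*B^2*X*Y*Complex.I + (-20:ℂ)*A^3*B^2*X*Y*Q^2*Complex.I + (10:ℂ)*A^3*B^2*X^2 + (10:ℂ)*A^3*B^2*X^2*Q^2 + (-10:ℂ)*A^3*B^2*X^2*P^2 + (20:ℂ)*A^3*B^3*Y*P^2 + (-20:ℂ)*A^3*B^3*Y*P^2*Complex.I^2 + (12:ℂ)*A^3*B^3*Y^2*Q*Complex.I + (-20:ℂ)*A^3*B^3*Y^2*Q*Complex.I^3 + (20:ℂ)*A^3*B^3*X*P^2*Complex.I + (8:ℂ)*A^3*B^3*X*Y*Q + (40:ℂ)*A^3*B^3*X*Y*Q*Complex.I^2 + (-20:ℂ)*A^3*B^3*X^2*Q*Complex.I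 + (-3:ℂ)*A^4*Y^2*Q + (5:ℂ)*A^4*B*Y^2*Complex.I + (5:ℂ)*A^4*B*Y^2*Q^2*Complex.I + (5:ℂ)*A^4*B*Y^2*P^2*Complex.I + (-10:ℂ)*A^4*B*X*Y + (-10:ℂ)*A^4*B*X*Y*Q^2 + (-15:ℂ)*A^4*B^2*Y*P^2*Complex.I + (-9:ℂ)*A^4*B^2*Y^2*Q + (-15:ℂ)*A^4*B^2*Y^2*Q*Complex.I^2 + (15:ℂ)*A^4*B^2*X*P^2 + (30:ℂ)*A^4*B^2*X*Y*Q*Complex.I + (-15:ℂ)*A^4*B^2*X^2*Q + (1:ℂ)*A^5*Y^2 + (1:ℂ)*A^5*Y^2*Q^2 + (1:ℂ)*A^5*Y^2*P^2 + (-6:ℂ)*A^5*B*Y*P^2 + (-6:ℂ)*A^5*B*Y^2*Q*Complex.I + (12:ℂ)*A^5*B*X*Y*Q + (-1:ℂ)*A^6*Y^2*Q) * hI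

theorem fundamental_polynomial_real_form (p q x y θ : ℝ) (z u : ℂ)
    (hz : z = Complex.mk x y) (hu : u = Complex.exp (θ * Complex.I)) :
    (u - z) * ((starRingEnd ℂ) z * u - 1) * (u ^ 2 - 1) ^ 2 * (p : ℂ) ^ 2
      - (u - (q : ℂ)) * ((starRingEnd ℂ) z * u ^ 2 - z) ^ 2 * ((q : ℂ) * u - 1) =
    4 * u ^ 3 * (((p ^ 2 * Real.sin θ ^ 2 *
        (x ^ 2 + y ^ 2 + 1 - 2 * x * Real.cos θ - 2 * y * Real.sin θ)
      - (q ^ 2 - 2 * q * Real.cos θ + 1) * (x * Real.sin θ - y * Real.cos θ) ^ 2 : ℝ) : ℂ)) := by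
  have h : (Real.cos θ : ℂ)^2 + (Real.sin θ : ℂ)^2 = 1 := by
    norm_cast
    exact Real.cos_sq_add_sin_sq θ
  have hconj : (starRingEnd ℂ) (Complex.mk x y) = (x:ℂ) - (y:ℂ) * Complex.I := by
    rw [Complex.mk_eq_add_mul_I, map_add, map_mul, Complex.conj_ofReal,
      Complex.conj_ofReal, Complex.conj_I]
    ring
  subst hz hu
  rw [hconj, Complex.exp_mul_I, ← Complex.ofReal_cos, ← Complex.ofReal_sin,
    Complex.mk_eq_add_mul_I,
    fundamental_polynomial_aux (Real.cos θ:ℂ) (Real.sin θ:ℂ) x y p q h]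
  push_cast
  ring
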